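/- Let G be a finite group and let p be a prime with p ≥ 5 such that p divides the order of G. Then G contains an element x ≠ 1 that has a Smarandache inverse. -/

import Mathlib

/-- In a group `G` with identity `1`, an element `x ≠ 1` has a Smarandache inverse
if there are `y a b : G` with `x*y = 1`, each of `a`, `b` distinct from `1`, `x`
and `y`, and `x*a = y`, `y*b = x`, `a*b = 1`. -/
def HasSmarandacheInverse {G : Type*} [Group G] (x : G) : Prop :=
  ∃ y a b : G, x * y = 1 ∧
    a ≠ 1 ∧ a ≠ x ∧ a ≠ y ∧ b ≠ 1 ∧ b ≠ x ∧ b ≠ y ∧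
    x * a = y ∧ y * b = x ∧ a * b = 1

/-- Let `G` be a finite group and `p ≥ 5` a prime dividing its order.  Then `G`
contains an element `x ≠ 1` having a Smarandache inverse. -/
theorem finite_group_has_smarandache_inverse_element {G : Type*} [Group G] [Finite G]
    (p : ℕ) (hp : p.Prime) (hp5 : 5 ≤ p) (hdvd : p ∣ Nat.card G) :
    ∃ x : G, x ≠ 1 ∧ HasSmarandacheInverse x := by
  haveI : Fact p.Prime := ⟨hp⟩
  obtain ⟨g, hg⟩ := exists_prime_orderOf_dvd_card' p hdvd
  have hpow : ∀ n : ℕ, 0 < n → n < p → g ^ n ≠ 1 := by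
    intro n hn0 hnp h
    have := orderOf_dvd_of_pow_eq_one h
    rw [hg] at this
    exact absurd (Nat.le_of_dvd hn0 this) (not_le.mpr hnp)
  have h1 : g ≠ 1 := by
    intro h
    exact hpow 1 one_pos (by omega) (by simp [h])
  refine ⟨g, h1, g⁻¹, g⁻¹ * g⁻¹, g * g, mul_inv_cancel g, ?_, ?_, ?_, ?_, ?_, ?_, ?_, ?_, ?_⟩
  · intro h
    apply hpow 2 (by norm_num) (by omega)
    have : (g ^ 2)⁻¹ = 1 := by rw [pow_two, mul_inv_rev]; exact h
    simpa using this
  · intro h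
    apply hpow 3 (by norm_num) (by omega)
    have h' := congrArg (fun z => g * g * z) h
    rw [mul_assoc, mul_inv_cancel_left, mul_inv_cancel] at h'
    calc g ^ 3 = g * g * g := by rw [pow_succ, pow_succ, pow_one]
    _ = 1 := h'.symm
  · intro h
    apply h1
    have : g⁻¹ * g⁻¹ = g⁻¹ * 1 := by rw [mul_one]; exact h
    have := mul_left_cancel this
    simpa using inv_injective (by simpa using this)
  · intro h
    exact hpow 2 (by norm_num) (by omega) (by rw [pow_two]; exact h)
  · intro h
    apply h1
    exact mul_left_cancel (a := g) (by simpa using h)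
  · intro h
    apply hpow 3 (by norm_num) (by omega)
    have h' := congrArg (fun z => z * g) h
    rw [inv_mul_cancel] at h'
    calc g ^ 3 = g * g * g := by rw [pow_succ, pow_succ, pow_one]
    _ = 1 := h' 
  · group
  · group
  · group
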